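/- Let A₁ and A₂ be regular edge sets in a finite directed acyclic graph with source s such that A₁ ≺ A₂. Then for any minimum cut CUT₁ between s and A₁ and any minimum cut CUT₁₂ between s and A₁ ∪ A₂, it holds that CUT₁ ≺ CUT₁₂. -/

import Mathlib

open Finset

/-- Consecutive edges in the list match head-to-tail. -/
def EChain {V E : Type*} (tl hd : E → V) (p : List E) : Prop :=
  p.Chain' (fun d e => hd d = tl e)

/-- A (nonempty) directed path of edges starting at node `s`. -/
def PathFrom {V E : Type*} (tl hd : E → V) (s : V) (p : List E) : Prop :=
  p ≠ [] ∧ EChain tl hd p ∧ ∀ e ∈ p.head?, tl e = s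

/-- The directed graph is acyclic: no nonempty edge-chain returns to its start. -/
def Acyclic {V E : Type*} (tl hd : E → V) : Prop :=
  ∀ p : List E, p ≠ [] → EChain tl hd p →
    ∀ d ∈ p.head?, ∀ e ∈ p.getLast?, hd e ≠ tl d

/-- `B` separates the edge set `A` from `s`: every directed path from `s`
ending with an edge of `A` passes through an edge of `B` (i.e. `B` is a cut
between `s` and `A`). -/
def Separates {V E : Type*} (tl hd : E → V) (s : V) (A B : Finset E) : Prop :=
  ∀ p : List E, PathFrom tl hd s p → (∃ e ∈ p.getLast?, e ∈ A) → ∃ b ∈ B, b ∈ p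

/-- The minimum cut capacity between `s` and the edge set `A`. -/
noncomputable def mincut {V E : Type*} [Fintype E] (tl hd : E → V) (s : V)
    (A : Finset E) : ℕ :=
  sInf {n | ∃ B : Finset E, Separates tl hd s A B ∧ B.card = n}

/-- `B` is a minimum cut between `s` and the edge set `A`. -/
def IsMinCut {V E : Type*} [Fintype E] (tl hd : E → V) (s : V) (A B : Finset E) : Prop :=
  Separates tl hd s A B ∧ B.card = mincut tl hd s A

/-- An edge set is regular if its cardinality equals its minimum cut capacity from `s`. -/
def Regular {V E : Type*} [Fintype E] (tl hd : E → V) (s : V) (A : Finset E) : Prop :=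
  A.card = mincut tl hd s A

/-- `A ∼ A'`: the two edge sets have a common minimum cut from `s`. -/
def EquivSets {V E : Type*} [Fintype E] (tl hd : E → V) (s : V) (A A' : Finset E) : Prop :=
  ∃ C : Finset E, IsMinCut tl hd s A C ∧ IsMinCut tl hd s A' C

/-- `A₁ ≺ A₂`: `|A₁| < |A₂|` and some minimum cut between `s` and `A₂`
also separates `A₁` from `s`. -/
def Dominates {V E : Type*} [Fintype E] (tl hd : E → V) (s : V) (A₁ A₂ : Finset E) : Prop :=
  A₁.card < A₂.card ∧
    ∃ C : Finset E, IsMinCut tl hd s A₂ C ∧ Separates tl hd s A₁ C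

/-- A directed path of edges from node `s` to node `t`. -/
def NPathFromTo {V E : Type*} (tl hd : E → V) (s t : V) (p : List E) : Prop :=
  PathFrom tl hd s p ∧ ∀ e ∈ p.getLast?, hd e = t

/-- `B` is a cut between the nodes `s` and `t`. -/
def NSeparates {V E : Type*} (tl hd : E → V) (s t : V) (B : Finset E) : Prop :=
  ∀ p : List E, NPathFromTo tl hd s t p → ∃ b ∈ B, b ∈ p

/-- The minimum cut capacity between the nodes `s` and `t`. -/
noncomputable def nmincut {V E : Type*} [Fintype E] (tl hd : E → V) (s t : V) : ℕ :=
  sInf {n | ∃ B : Finset E, NSeparates tl hd s t B ∧ B.card = n}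

/-- `B` is a minimum cut between the nodes `s` and `t`. -/
def IsNodeMinCut {V E : Type*} [Fintype E] (tl hd : E → V) (s t : V) (B : Finset E) : Prop :=
  NSeparates tl hd s t B ∧ B.card = nmincut tl hd s t

/-- `d ≤ e` for edges: there is a directed path starting with `d` and ending with `e`
(in particular `d ≤ d`). -/
def EdgeLe {V E : Type*} (tl hd : E → V) (d e : E) : Prop :=
  ∃ p : List E, EChain tl hd p ∧ p.head? = some d ∧ p.getLast? = some e

/-- A family of pairwise edge-disjoint paths. -/
def EdgeDisjoint {E : Type*} {n : ℕ} (P : Fin n → List E) : Prop :=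
  ∀ i j, i ≠ j → List.Disjoint (P i) (P j)

/-- The primary minimum cut between nodes `s` and `t`: a minimum cut separating
every minimum cut between `s` and `t` from `s`. -/
def IsPrimaryNodeMinCut {V E : Type*} [Fintype E] (tl hd : E → V) (s t : V)
    (C : Finset E) : Prop :=
  IsNodeMinCut tl hd s t C ∧
    ∀ C' : Finset E, IsNodeMinCut tl hd s t C' → Separates tl hd s C' C

/-- The primary minimum cut between `s` and an edge set `A`. -/
def IsPrimaryMinCut {V E : Type*} [Fintype E] (tl hd : E → V) (s : V)
    (A C : Finset E) : Prop :=
  IsMinCut tl hd s A C ∧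
    ∀ C' : Finset E, IsMinCut tl hd s A C' → Separates tl hd s C' C

/-- The equivalence class (within the collection `𝒜`) of the wiretap set `A`
under the relation `∼`. -/
def ClassOf {V E : Type*} [Fintype E] (tl hd : E → V) (s : V)
    (𝒜 : Finset (Finset E)) (A : Finset E) : Set (Finset E) :=
  {A' | A' ∈ 𝒜 ∧ EquivSets tl hd s A A'}

/-- Domination amongst (distinct) equivalence classes: some common minimum cut of all
the sets in `C₂` separates every set in `C₁` from `s`. -/
def ClDominates {V E : Type*} [Fintype E] (tl hd : E → V) (s : V)
    (C₁ C₂ : Set (Finset E)) : Prop :=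
  C₁ ≠ C₂ ∧ ∃ CUT : Finset E,
    (∀ A ∈ C₂, IsMinCut tl hd s A CUT) ∧ (∀ A ∈ C₁, Separates tl hd s A CUT)


section AuxSec

variable {V E : Type*} [Fintype E] [DecidableEq E]

/-- `e` is reachable from `s` by a path avoiding the edge set `F` entirely. -/
def ReachAvoid (tl hd : E → V) (s : V) (F : Finset E) (e : E) : Prop :=
  ∃ p : List E, PathFrom tl hd s p ∧ p.getLast? = some e ∧ ∀ x ∈ p, x ∉ F

open Classical in
/-- The frontier of a "good" predicate `G` on edges: edges that are not good but
start at `s` or immediately follow a good edge. -/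
noncomputable def eFrontier (tl hd : E → V) (s : V) (G : E → Prop) : Finset E :=
  Finset.univ.filter fun e => ¬ G e ∧ (tl e = s ∨ ∃ d, G d ∧ hd d = tl e)

lemma mem_eFrontier {tl hd : E → V} {s : V} {G : E → Prop} {e : E} :
    e ∈ eFrontier tl hd s G ↔ ¬ G e ∧ (tl e = s ∨ ∃ d, G d ∧ hd d = tl e) := by
  classical
  simp [eFrontier]

lemma exists_frontier_on_chain {tl hd : E → V} {s : V} (G : E → Prop) :
    ∀ (p : List E) (v : V), EChain tl hd p → (∀ e ∈ p.head?, tl e = v) →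
      (v = s ∨ ∃ d, G d ∧ hd d = v) → (∃ x ∈ p, ¬ G x) →
      ∃ e ∈ p, ¬ G e ∧ (tl e = s ∨ ∃ d, G d ∧ hd d = tl e) := by
  intro p
  induction p with
  | nil => intro v _ _ _ h; simp at h
  | cons a t ih =>
    intro v hchain hhead hv hbad
    by_cases hGa : G a
    · obtain ⟨x, hx, hGx⟩ := hbad
      have hxt : x ∈ t := by
        rcases List.mem_cons.1 hx with rfl | h
        · exact absurd hGa hGx
        · exact h
      have hchain' : List.Chain' (fun d e => hd d = tl e) (a :: t) := hchain
      have hhead' : ∀ e ∈ t.head?, tl e = hd a := by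
        cases t with
        | nil => simp
        | cons b t' =>
          intro e he
          simp only [List.head?_cons, Option.mem_def, Option.some.injEq] at he
          subst he
          exact ((List.isChain_cons_cons).1 hchain').1.symm
      obtain ⟨e, he, hprop⟩ := ih (hd a) hchain'.tail hhead'
        (Or.inr ⟨a, hGa, rfl⟩) ⟨x, hxt, hGx⟩
      exact ⟨e, List.mem_cons_of_mem _ he, hprop⟩
    · refine ⟨a, List.mem_cons_self, hGa, ?_⟩
      have hta : tl a = v := hhead a (by simp)
      rw [hta]; exact hv

lemma eFrontier_separates {tl hd : E → V} {s : V} (G : E → Prop) (T : Finset E)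
    (hT : ∀ a ∈ T, ¬ G a) : Separates tl hd s T (eFrontier tl hd s G) := by
  rintro p hp ⟨a, ha, haT⟩
  have hamem : a ∈ p := List.mem_of_mem_getLast? ha
  obtain ⟨e, he, h1, h2⟩ := exists_frontier_on_chain G p s hp.2.1 hp.2.2 (Or.inl rfl)
    ⟨a, hamem, hT a haT⟩
  exact ⟨e, mem_eFrontier.2 ⟨h1, h2⟩, he⟩

lemma pathFrom_singleton {tl hd : E → V} {s : V} {e : E} (h : tl e = s) :
    PathFrom tl hd s [e] := by
  refine ⟨by simp, List.isChain_singleton e, ?_⟩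
  intro x hx
  simp only [List.head?_cons, Option.mem_def, Option.some.injEq] at hx
  subst hx; exact h

lemma pathFrom_append {tl hd : E → V} {s : V} {p : List E} (hp : PathFrom tl hd s p)
    {d e : E} (hlast : p.getLast? = some d) (hde : hd d = tl e) :
    PathFrom tl hd s (p ++ [e]) := by
  obtain ⟨hne, hchain, hhead⟩ := hp
  refine ⟨by simp, ?_, ?_⟩
  · refine List.isChain_append.2 ⟨hchain, List.isChain_singleton e, ?_⟩
    intro x hx y hy
    rw [hlast] at hx
    simp only [Option.mem_def, Option.some.injEq] at hx
    simp only [List.head?_cons, Option.mem_def, Option.some.injEq] at hy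
    subst hx; subst hy; exact hde
  · cases p with
    | nil => exact absurd rfl hne
    | cons a t =>
      intro x hx
      simp only [List.cons_append, List.head?_cons, Option.mem_def,
        Option.some.injEq] at hx
      subst hx
      exact hhead a (by simp)

lemma reachAvoid_mono {tl hd : E → V} {s : V} {F F' : Finset E} (hFF : F ⊆ F') {e : E}
    (h : ReachAvoid tl hd s F' e) : ReachAvoid tl hd s F e := by
  obtain ⟨p, hp, hl, hav⟩ := h
  exact ⟨p, hp, hl, fun x hx hxF => hav x hx (hFF hxF)⟩

lemma mem_of_not_reachAvoid {tl hd : E → V} {s : V} {F : Finset E} {e : E}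
    (hgood : tl e = s ∨ ∃ d, ReachAvoid tl hd s F d ∧ hd d = tl e)
    (hne : ¬ ReachAvoid tl hd s F e) : e ∈ F := by
  by_contra heF
  apply hne
  rcases hgood with h | ⟨d, ⟨p, hp, hl, hav⟩, hde⟩
  · refine ⟨[e], pathFrom_singleton h, by simp, ?_⟩
    intro x hx
    simp only [List.mem_singleton] at hx
    subst hx; exact heF
  · refine ⟨p ++ [e], pathFrom_append hp hl hde, List.getLast?_concat, ?_⟩
    intro x hx
    rcases List.mem_append.1 hx with h' | h'
    · exact hav x h'
    · simp only [List.mem_singleton] at h'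
      subst h'; exact heF

lemma not_reachAvoid_of_separates {tl hd : E → V} {s : V} {A F : Finset E}
    (hsep : Separates tl hd s A F) {a : E} (ha : a ∈ A) :
    ¬ ReachAvoid tl hd s F a := by
  rintro ⟨p, hp, hl, hav⟩
  obtain ⟨b, hbF, hbp⟩ := hsep p hp ⟨a, hl, ha⟩
  exact hav b hbp hbF

lemma not_reachAvoid_of_mem {tl hd : E → V} {s : V} {F : Finset E} {a : E} (ha : a ∈ F) :
    ¬ ReachAvoid tl hd s F a := by
  rintro ⟨p, hp, hl, hav⟩
  exact hav a (List.mem_of_mem_getLast? hl) ha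

lemma separates_splice {tl hd : E → V} {s : V} {A B X : Finset E}
    (hAB : Separates tl hd s A B) (hBX : Separates tl hd s B X) :
    Separates tl hd s A X := by
  rintro p hp hlast
  obtain ⟨b, hbB, hbp⟩ := hAB p hp hlast
  obtain ⟨q, r, rfl⟩ := List.append_of_mem hbp
  have hperm : q ++ b :: r = (q ++ [b]) ++ r := by simp
  have hchain : List.Chain' (fun d e => hd d = tl e) ((q ++ [b]) ++ r) := by
    rw [← hperm]; exact hp.2.1
  have hpre : PathFrom tl hd s (q ++ [b]) := by
    refine ⟨by simp, hchain.left_of_append, ?_⟩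
    intro x hx
    apply hp.2.2
    cases q with
    | nil => simpa using hx
    | cons a t =>
      simp only [List.cons_append, List.head?_cons, Option.mem_def,
        Option.some.injEq] at hx ⊢
      exact hx
  obtain ⟨x, hxX, hxmem⟩ := hBX (q ++ [b]) hpre ⟨b, List.getLast?_concat, hbB⟩
  refine ⟨x, hxX, ?_⟩
  rcases List.mem_append.1 hxmem with h | h
  · exact List.mem_append.2 (Or.inl h)
  · simp only [List.mem_singleton] at h
    subst h
    exact List.mem_append.2 (Or.inr List.mem_cons_self)

lemma mincut_le_card {tl hd : E → V} {s : V} {A B : Finset E}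
    (h : Separates tl hd s A B) : mincut tl hd s A ≤ B.card :=
  Nat.sInf_le ⟨B, h, rfl⟩

lemma separates_self {tl hd : E → V} {s : V} (A : Finset E) : Separates tl hd s A A := by
  rintro p hp ⟨a, ha, haA⟩
  exact ⟨a, haA, List.mem_of_mem_getLast? ha⟩

lemma le_mincut {tl hd : E → V} {s : V} {A : Finset E} {k : ℕ}
    (h : ∀ B : Finset E, Separates tl hd s A B → k ≤ B.card) :
    k ≤ mincut tl hd s A := by
  have hne : {n | ∃ B : Finset E, Separates tl hd s A B ∧ B.card = n}.Nonempty :=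
    ⟨A.card, A, separates_self A, rfl⟩
  apply le_csInf hne
  rintro n ⟨B, hB, rfl⟩
  exact h B hB

end AuxSec

/-- if `A₁ ≺ A₂`, then for any minimum cut `CUT₁` of `A₁` and any
minimum cut `CUT₁₂` of `A₁ ∪ A₂`, `CUT₁ ≺ CUT₁₂`. -/
theorem minCut_dominates_minCut_union {V E : Type*} [Fintype E] [DecidableEq E]
    (tl hd : E → V) (s : V)
    (hacy : Acyclic tl hd) (hsrc : ∀ e : E, hd e ≠ s)
    (A₁ A₂ : Finset E) (h₁ : Regular tl hd s A₁) (h₂ : Regular tl hd s A₂)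
    (hdom : Dominates tl hd s A₁ A₂)
    (CUT₁ CUT₁₂ : Finset E)
    (hC₁ : IsMinCut tl hd s A₁ CUT₁)
    (hC₁₂ : IsMinCut tl hd s (A₁ ∪ A₂) CUT₁₂) :
    Dominates tl hd s CUT₁ CUT₁₂ := by
  
  obtain ⟨hC₁sep, hC₁card⟩ := hC₁
  obtain ⟨hC₁₂sep, hC₁₂card⟩ := hC₁₂
  obtain ⟨hcardlt, C, hCmin, hCsep⟩ := hdom
  have h₁' : A₁.card = mincut tl hd s A₁ := h₁
  have h₂' : A₂.card = mincut tl hd s A₂ := h₂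
  -- cardinality inequality
  have hA2le : A₂.card ≤ CUT₁₂.card := by
    have h1 : Separates tl hd s A₂ CUT₁₂ := by
      rintro p hp ⟨a, ha, haA⟩
      exact hC₁₂sep p hp ⟨a, ha, Finset.mem_union_right _ haA⟩
    have h2 := mincut_le_card h1
    omega
  have hcard1 : CUT₁.card < CUT₁₂.card := by omega
  refine ⟨hcard1, ?_⟩
  -- two frontier cuts
  have hDsepC1 : Separates tl hd s CUT₁
      (eFrontier tl hd s (ReachAvoid tl hd s (CUT₁ ∪ CUT₁₂))) :=
    eFrontier_separates _ _ (fun a ha => not_reachAvoid_of_mem (Finset.mem_union_left _ ha))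
  have hDsepB : Separates tl hd s CUT₁₂
      (eFrontier tl hd s (ReachAvoid tl hd s (CUT₁ ∪ CUT₁₂))) :=
    eFrontier_separates _ _ (fun a ha => not_reachAvoid_of_mem (Finset.mem_union_right _ ha))
  have hJsepA1 : Separates tl hd s A₁
      (eFrontier tl hd s
        (fun e => ReachAvoid tl hd s CUT₁ e ∨ ReachAvoid tl hd s CUT₁₂ e)) := by
    apply eFrontier_separates
    intro a ha h
    rcases h with h | h
    · exact not_reachAvoid_of_separates hC₁sep ha h
    · exact not_reachAvoid_of_separates hC₁₂sep (Finset.mem_union_left _ ha) h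
  set D := eFrontier tl hd s (ReachAvoid tl hd s (CUT₁ ∪ CUT₁₂)) with hDdef
  set J := eFrontier tl hd s
      (fun e => ReachAvoid tl hd s CUT₁ e ∨ ReachAvoid tl hd s CUT₁₂ e) with hJdef
  -- subset facts
  have hsub_union : D ∪ J ⊆ CUT₁ ∪ CUT₁₂ := by
    intro e he
    rcases Finset.mem_union.1 he with he | he
    · rw [hDdef, mem_eFrontier] at he
      exact mem_of_not_reachAvoid he.2 he.1
    · rw [hJdef, mem_eFrontier] at he
      obtain ⟨h1, h2⟩ := he
      push_neg at h1
      rcases h2 with h2 | ⟨d, hd', hde⟩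
      · exact Finset.mem_union_left _ (mem_of_not_reachAvoid (Or.inl h2) h1.1)
      · rcases hd' with hd1 | hd2
        · exact Finset.mem_union_left _
            (mem_of_not_reachAvoid (Or.inr ⟨d, hd1, hde⟩) h1.1)
        · exact Finset.mem_union_right _
            (mem_of_not_reachAvoid (Or.inr ⟨d, hd2, hde⟩) h1.2)
  have hsub_inter : D ∩ J ⊆ CUT₁ ∩ CUT₁₂ := by
    intro e he
    obtain ⟨heD, heJ⟩ := Finset.mem_inter.1 he
    rw [hDdef, mem_eFrontier] at heD
    rw [hJdef, mem_eFrontier] at heJ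
    obtain ⟨_, hD2⟩ := heD
    obtain ⟨hJ1, _⟩ := heJ
    push_neg at hJ1
    have hgood1 : tl e = s ∨ ∃ d, ReachAvoid tl hd s CUT₁ d ∧ hd d = tl e := by
      rcases hD2 with h | ⟨d, hd', hde⟩
      · exact Or.inl h
      · exact Or.inr ⟨d, reachAvoid_mono Finset.subset_union_left hd', hde⟩
    have hgood2 : tl e = s ∨ ∃ d, ReachAvoid tl hd s CUT₁₂ d ∧ hd d = tl e := by
      rcases hD2 with h | ⟨d, hd', hde⟩
      · exact Or.inl h
      · exact Or.inr ⟨d, reachAvoid_mono Finset.subset_union_right hd', hde⟩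
    exact Finset.mem_inter.2 ⟨mem_of_not_reachAvoid hgood1 hJ1.1,
      mem_of_not_reachAvoid hgood2 hJ1.2⟩
  -- counting
  have hcount : D.card + J.card ≤ CUT₁.card + CUT₁₂.card := by
    calc D.card + J.card = (D ∪ J).card + (D ∩ J).card :=
          (Finset.card_union_add_card_inter D J).symm
      _ ≤ (CUT₁ ∪ CUT₁₂).card + (CUT₁ ∩ CUT₁₂).card :=
          add_le_add (Finset.card_le_card hsub_union) (Finset.card_le_card hsub_inter)
      _ = CUT₁.card + CUT₁₂.card := Finset.card_union_add_card_inter _ _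
  have hJge : CUT₁.card ≤ J.card := by
    have h3 := mincut_le_card hJsepA1
    omega
  have hDle : D.card ≤ CUT₁₂.card := by omega
  -- CUT₁₂ is regular, so D is a minimum cut of it
  have hlow : CUT₁₂.card ≤ mincut tl hd s CUT₁₂ := by
    apply le_mincut
    intro X hX
    have h4 : Separates tl hd s (A₁ ∪ A₂) X := separates_splice hC₁₂sep hX
    have h5 := mincut_le_card h4
    omega
  have hhigh : mincut tl hd s CUT₁₂ ≤ D.card := mincut_le_card hDsepB
  exact ⟨D, ⟨hDsepB, by omega⟩, hDsepC1⟩
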